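/- Let m ≥ 1 and let a < b be real numbers. Let S = {x ∈ ℝ^m : a ≤ x_m ≤ b} be the closed slab. If u : ℝ^m → ℝ is bounded on S, continuous on S, harmonic on the open slab {x : a < x_m < b}, and equal to 0 at every point of the two hyperplanes {x_m = a} and {x_m = b}, then u vanishes identically on S. (Dirichlet parabolicity of the Euclidean slab, proved via the Khas'minskii test with the function (1/2)(x_m − a)(b − x_m) + ε|x|².) -/

import Mathlib

/-- The Euclidean Laplacian `Δu(x) = ∑ i, ∂²u/∂xᵢ²(x)`. -/
noncomputable def lap {n : ℕ} (u : EuclideanSpace ℝ (Fin n) → ℝ)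
    (x : EuclideanSpace ℝ (Fin n)) : ℝ :=
  ∑ i : Fin n,
    fderiv ℝ (fun y => fderiv ℝ u y (EuclideanSpace.single i 1)) x (EuclideanSpace.single i 1)

/-- `u` is harmonic on `U`: it is `C²` there and its Laplacian vanishes identically on `U`. -/
def IsHarmonicOn {n : ℕ} (u : EuclideanSpace ℝ (Fin n) → ℝ)
    (U : Set (EuclideanSpace ℝ (Fin n))) : Prop :=
  ContDiffOn ℝ 2 u U ∧ ∀ x ∈ U, lap u x = 0

open Filter Topology

lemma second_deriv_nonpos_of_isLocalMax {f f' : ℝ → ℝ} {s : ℝ}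
    (hf : ∀ᶠ t in 𝓝 (0:ℝ), HasDerivAt f (f' t) t)
    (hf' : HasDerivAt f' s 0) (hmax : IsLocalMax f 0) : s ≤ 0 := by
  by_contra hs
  push_neg at hs
  have hf'0 : f' 0 = 0 := by
    have hd : deriv f 0 = 0 := hmax.deriv_eq_zero
    have h := (hf.self_of_nhds).deriv
    rw [hd] at h
    exact h.symm
  have hslope : ∀ᶠ t in 𝓝 (0:ℝ), t ∈ Set.Ioi (0:ℝ) → 0 < f' t := by
    have h1 : Filter.Tendsto (slope f' 0) (𝓝[≠] (0:ℝ)) (𝓝 s) :=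
      hasDerivAt_iff_tendsto_slope.mp hf'
    have h2 : ∀ᶠ t in 𝓝[≠] (0:ℝ), 0 < slope f' 0 t :=
      h1.eventually (eventually_gt_nhds hs)
    rw [eventually_nhdsWithin_iff] at h2
    filter_upwards [h2] with t ht ht0
    have h3 := ht (by simp [ne_of_gt (Set.mem_Ioi.mp ht0)] : t ∈ ({0}ᶜ : Set ℝ))
    have h4 : slope f' 0 t = f' t / t := by
      simp [slope, hf'0]
      ring
    rw [h4] at h3
    have ht0' : 0 < t := ht0
    nlinarith [mul_pos h3 ht0', div_mul_cancel₀ (f' t) (ne_of_gt ht0')]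
  have hcomb := hf.and (hmax.and hslope)
  rw [Metric.eventually_nhds_iff] at hcomb
  obtain ⟨δ, hδ, hall⟩ := hcomb
  set c : ℝ := δ/2 with hc
  have hc0 : 0 < c := by positivity
  have hmem : ∀ t ∈ Set.Icc (0:ℝ) c, dist t 0 < δ := by
    intro t ht
    rw [Real.dist_eq, sub_zero, abs_of_nonneg ht.1]
    calc t ≤ c := ht.2
    _ < δ := by rw [hc]; linarith
  have hcont : ContinuousOn f (Set.Icc 0 c) := fun t ht =>
    ((hall (hmem t ht)).1.continuousAt).continuousWithinAt
  have hderiv : ∀ t ∈ interior (Set.Icc (0:ℝ) c), 0 < deriv f t := by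
    rw [interior_Icc]
    intro t ht
    have h := hall (hmem t ⟨ht.1.le, ht.2.le⟩)
    rw [h.1.deriv]
    exact h.2.2 ht.1
  have hmono := strictMonoOn_of_deriv_pos (convex_Icc 0 c) hcont hderiv
  have hlt : f 0 < f c := hmono ⟨le_refl 0, hc0.le⟩ ⟨hc0.le, le_refl c⟩ hc0
  have hle : f c ≤ f 0 := (hall (hmem c ⟨hc0.le, le_refl c⟩)).2.1
  linarith

example (m : ℕ) (i : Fin m) (x : EuclideanSpace ℝ (Fin m)) :
    EuclideanSpace.proj (𝕜 := ℝ) i x = x i := rfl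

lemma dir2_nonpos {m : ℕ} {v : EuclideanSpace ℝ (Fin m) → ℝ}
    {x₀ w : EuclideanSpace ℝ (Fin m)}
    {O : Set (EuclideanSpace ℝ (Fin m))} (hO : IsOpen O) (hx : x₀ ∈ O)
    (hv : ContDiffOn ℝ 2 v O) (hmax : ∀ y ∈ O, v y ≤ v x₀) :
    fderiv ℝ (fun y => fderiv ℝ v y w) x₀ w ≤ 0 := by
  set L : ℝ → EuclideanSpace ℝ (Fin m) := fun t => x₀ + t • w with hLdef
  have hL0 : L 0 = x₀ := by simp [hLdef]
  have hLd : ∀ t : ℝ, HasDerivAt L w t := fun t => by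
    have := ((hasDerivAt_id t).smul_const w).const_add x₀
    simp only [id_eq, one_smul] at this
    exact this
  have hLc : Continuous L := by
    apply Continuous.add continuous_const
    exact (continuous_id.smul continuous_const)
  have hT : ∀ᶠ t in 𝓝 (0:ℝ), L t ∈ O := by
    have h1 : L ⁻¹' O ∈ 𝓝 (0:ℝ) :=
      (hO.preimage hLc).mem_nhds (by simp [Set.mem_preimage, hL0, hx])
    filter_upwards [h1] with t ht using ht
  have hdiff : ∀ y ∈ O, DifferentiableAt ℝ v y := fun y hy =>
    (hv.differentiableOn (by norm_num)).differentiableAt (hO.mem_nhds hy)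
  have hf : ∀ᶠ t in 𝓝 (0:ℝ), HasDerivAt (fun t => v (L t)) (fderiv ℝ v (L t) w) t := by
    filter_upwards [hT] with t ht
    exact ((hdiff _ ht).hasFDerivAt).comp_hasDerivAt t (hLd t)
  have hg : DifferentiableAt ℝ (fun y => fderiv ℝ v y w) x₀ := by
    have h1 : DifferentiableAt ℝ (fderiv ℝ v) x₀ :=
      ((hv.fderiv_of_isOpen (m := 1) hO (by norm_num)).differentiableOn
        (by norm_num)).differentiableAt (hO.mem_nhds hx)
    exact (ContinuousLinearMap.apply ℝ ℝ w).differentiableAt.comp x₀ h1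
  have hf' : HasDerivAt (fun t => fderiv ℝ v (L t) w)
      (fderiv ℝ (fun y => fderiv ℝ v y w) x₀ w) 0 := by
    have h2 : HasFDerivAt (fun y => fderiv ℝ v y w)
        (fderiv ℝ (fun y => fderiv ℝ v y w) x₀) (L 0) := by
      rw [hL0]; exact hg.hasFDerivAt
    exact h2.comp_hasDerivAt 0 (hLd 0)
  have hmax0 : IsLocalMax (fun t => v (L t)) 0 := by
    filter_upwards [hT] with t ht
    simpa [hL0] using hmax _ ht
  exact second_deriv_nonpos_of_isLocalMax hf hf' hmax0

noncomputable def phi (m : ℕ) (j : Fin m) (a b ε : ℝ)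
    (x : EuclideanSpace ℝ (Fin m)) : ℝ :=
  (x j - a) * (b - x j) / 2 + ∑ i, ε * (x i * x i)

noncomputable def phiD (m : ℕ) (j : Fin m) (a b ε : ℝ)
    (y : EuclideanSpace ℝ (Fin m)) : EuclideanSpace ℝ (Fin m) →L[ℝ] ℝ :=
  ((a + b) / 2 - y j) • (EuclideanSpace.proj (𝕜 := ℝ) j)
    + ∑ i, (2 * ε * y i) • (EuclideanSpace.proj (𝕜 := ℝ) i)

lemma phi_hasFDerivAt (m : ℕ) (j : Fin m) (a b ε : ℝ)
    (y : EuclideanSpace ℝ (Fin m)) :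
    HasFDerivAt (phi m j a b ε) (phiD m j a b ε y) y := by
  have pj := (EuclideanSpace.proj (𝕜 := ℝ) j)
  have h1 : HasFDerivAt (fun x : EuclideanSpace ℝ (Fin m) => (x j - a) * (b - x j) / 2)
      (((a + b) / 2 - y j) • (EuclideanSpace.proj (𝕜 := ℝ) j)) y := by
    have h := ((((EuclideanSpace.proj (𝕜 := ℝ) j).hasFDerivAt (x := y)).sub_const a).mul
      ((hasFDerivAt_const b y).sub ((EuclideanSpace.proj (𝕜 := ℝ) j).hasFDerivAt))).mul_const ((2:ℝ)⁻¹)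
    refine h.congr_fderiv ?_
    ext z
    simp [PiLp.proj_apply]
    ring
  have h2 : ∀ i : Fin m, HasFDerivAt (fun x : EuclideanSpace ℝ (Fin m) => ε * (x i * x i))
      ((2 * ε * y i) • (EuclideanSpace.proj (𝕜 := ℝ) i)) y := by
    intro i
    have h := (((EuclideanSpace.proj (𝕜 := ℝ) i).hasFDerivAt (x := y)).mul
      ((EuclideanSpace.proj (𝕜 := ℝ) i).hasFDerivAt)).const_mul ε
    refine h.congr_fderiv ?_
    ext z
    simp [PiLp.proj_apply]
    ring
  exact h1.add (HasFDerivAt.fun_sum (fun i _ => h2 i))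

lemma phiD_apply (m : ℕ) (j : Fin m) (a b ε : ℝ) (y : EuclideanSpace ℝ (Fin m)) (k : Fin m) :
    phiD m j a b ε y (EuclideanSpace.single k 1)
      = ((a + b) / 2 - y j) * (if j = k then 1 else 0) + 2 * ε * y k := by
  unfold phiD
  simp [ContinuousLinearMap.sum_apply, PiLp.proj_apply,
    EuclideanSpace.single_apply, mul_ite, Finset.sum_ite_eq]

noncomputable def bdd (m : ℕ) (j k : Fin m) : ℝ := if j = k then 1 else 0

noncomputable def phiG (m : ℕ) (j : Fin m) (a b ε : ℝ) (k : Fin m)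
    (y : EuclideanSpace ℝ (Fin m)) : ℝ :=
  ((a + b) / 2 - y j) * (if j = k then 1 else 0) + 2 * ε * y k

lemma phiG_hasFDerivAt (m : ℕ) (j : Fin m) (a b ε : ℝ) (k : Fin m)
    (x : EuclideanSpace ℝ (Fin m)) :
    HasFDerivAt (phiG m j a b ε k)
      ((-(if j = k then (1:ℝ) else 0)) • (EuclideanSpace.proj (𝕜 := ℝ) j)
        + (2 * ε) • (EuclideanSpace.proj (𝕜 := ℝ) k)) x := by
  have h1 : HasFDerivAt
      (fun y : EuclideanSpace ℝ (Fin m) => ((a + b) / 2 - y j) * (if j = k then (1:ℝ) else 0))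
      ((-(if j = k then (1:ℝ) else 0)) • (EuclideanSpace.proj (𝕜 := ℝ) j)) x := by
    have h := ((hasFDerivAt_const ((a+b)/2) x).sub
      ((EuclideanSpace.proj (𝕜 := ℝ) j).hasFDerivAt)).mul_const (if j = k then (1:ℝ) else 0)
    refine h.congr_fderiv ?_
    ext z
    simp [PiLp.proj_apply]
  have h2 : HasFDerivAt (fun y : EuclideanSpace ℝ (Fin m) => 2 * ε * y k)
      ((2 * ε) • (EuclideanSpace.proj (𝕜 := ℝ) k)) x :=
    ((EuclideanSpace.proj (𝕜 := ℝ) k).hasFDerivAt).const_mul (2 * ε)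
  exact h1.add h2

lemma phi_second (m : ℕ) (j : Fin m) (a b ε : ℝ) (k : Fin m)
    (x : EuclideanSpace ℝ (Fin m)) :
    fderiv ℝ (fun y => fderiv ℝ (phi m j a b ε) y (EuclideanSpace.single k 1)) x
      (EuclideanSpace.single k 1) = -(if j = k then (1:ℝ) else 0) + 2 * ε := by
  have h1 : (fun y => fderiv ℝ (phi m j a b ε) y (EuclideanSpace.single k 1))
      = phiG m j a b ε k := by
    funext y
    rw [(phi_hasFDerivAt m j a b ε y).fderiv]
    exact phiD_apply m j a b ε y k
  rw [h1, (phiG_hasFDerivAt m j a b ε k x).fderiv]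
  by_cases h : j = k
  · simp [PiLp.proj_apply, EuclideanSpace.single_apply, h]
  · simp [PiLp.proj_apply, EuclideanSpace.single_apply, h, Ne.symm h]

lemma lap_neg {n : ℕ} (u : EuclideanSpace ℝ (Fin n) → ℝ) (x : EuclideanSpace ℝ (Fin n)) :
    lap (fun y => -u y) x = -lap u x := by
  unfold lap
  rw [← Finset.sum_neg_distrib]
  apply Finset.sum_congr rfl
  intro i _
  have h1 : (fun y => fderiv ℝ (fun z => -u z) y (EuclideanSpace.single i 1))
      = fun y => -(fderiv ℝ u y (EuclideanSpace.single i 1)) := by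
    funext y
    rw [fderiv_fun_neg]
    simp
  rw [h1, fderiv_fun_neg]
  simp

lemma phi_contDiff (m : ℕ) (j : Fin m) (a b ε : ℝ) :
    ContDiff ℝ 2 (phi m j a b ε) := by
  unfold phi
  apply ContDiff.add
  · apply ContDiff.div_const
    exact (((EuclideanSpace.proj (𝕜 := ℝ) j).contDiff).sub contDiff_const).mul
      (contDiff_const.sub ((EuclideanSpace.proj (𝕜 := ℝ) j).contDiff))
  · exact ContDiff.sum fun i _ =>
      contDiff_const.mul (((EuclideanSpace.proj (𝕜 := ℝ) i).contDiff).mul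
        ((EuclideanSpace.proj (𝕜 := ℝ) i).contDiff))
set_option maxHeartbeats 1000000 in
lemma key_ineq (m : ℕ) (hm : 1 ≤ m) (a b : ℝ) (hab : a < b) (j : Fin m)
    (u : EuclideanSpace ℝ (Fin m) → ℝ) (C : ℝ)
    (hC : ∀ x ∈ {x : EuclideanSpace ℝ (Fin m) | a ≤ x j ∧ x j ≤ b}, |u x| ≤ C)
    (hcont : ContinuousOn u {x : EuclideanSpace ℝ (Fin m) | a ≤ x j ∧ x j ≤ b})
    (hharm : IsHarmonicOn u {x : EuclideanSpace ℝ (Fin m) | a < x j ∧ x j < b})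
    (hzero : ∀ x : EuclideanSpace ℝ (Fin m), x j = a ∨ x j = b → u x = 0)
    (x : EuclideanSpace ℝ (Fin m)) (hx : a ≤ x j ∧ x j ≤ b)
    (lam : ℝ) (hlam : 0 < lam) :
    u x ≤ lam * phi m j a b (1 / (4 * (m:ℝ))) x := by
  set ε : ℝ := 1 / (4 * (m:ℝ)) with hεdef
  have hm0 : (0:ℝ) < m := by exact_mod_cast hm
  have hε : 0 < ε := by rw [hεdef]; positivity
  have hC0 : 0 ≤ C := by
    have hpt : (EuclideanSpace.single j a : EuclideanSpace ℝ (Fin m))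
        ∈ {x : EuclideanSpace ℝ (Fin m) | a ≤ x j ∧ x j ≤ b} := by
      constructor <;> simp [EuclideanSpace.single_apply] <;> linarith
    exact le_trans (abs_nonneg _) (hC _ hpt)
  set R : ℝ := max ‖x‖ (Real.sqrt (C / (lam * ε))) with hRdef
  have hxR : ‖x‖ ≤ R := le_max_left _ _
  have hR2 : C ≤ lam * ε * R ^ 2 := by
    have h1 : 0 ≤ C / (lam * ε) := by positivity
    have h2 : Real.sqrt (C / (lam * ε)) ≤ R := le_max_right _ _
    have h3 := Real.sq_sqrt h1
    have h4 : Real.sqrt (C / (lam * ε)) ^ 2 ≤ R ^ 2 :=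
      pow_le_pow_left₀ (Real.sqrt_nonneg _) h2 2
    rw [h3, div_le_iff₀ (by positivity)] at h4
    nlinarith
  set Slab := {y : EuclideanSpace ℝ (Fin m) | a ≤ y j ∧ y j ≤ b} with hSlabdef
  set OSlab := {y : EuclideanSpace ℝ (Fin m) | a < y j ∧ y j < b} with hOSlabdef
  have hSlabClosed : IsClosed Slab := by
    have h : Slab = (EuclideanSpace.proj (𝕜 := ℝ) j) ⁻¹' (Set.Icc a b) := by
      ext y; simp [hSlabdef, Set.mem_Icc, PiLp.proj_apply]
    rw [h]
    exact isClosed_Icc.preimage (EuclideanSpace.proj (𝕜 := ℝ) j).continuous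
  have hOSlabOpen : IsOpen OSlab := by
    have h : OSlab = (EuclideanSpace.proj (𝕜 := ℝ) j) ⁻¹' (Set.Ioo a b) := by
      ext y; simp [hOSlabdef, Set.mem_Ioo, PiLp.proj_apply]
    rw [h]
    exact isOpen_Ioo.preimage (EuclideanSpace.proj (𝕜 := ℝ) j).continuous
  set K := Slab ∩ Metric.closedBall (0 : EuclideanSpace ℝ (Fin m)) R with hKdef
  set O := OSlab ∩ Metric.ball (0 : EuclideanSpace ℝ (Fin m)) R with hOdef
  have hOopen : IsOpen O := hOSlabOpen.inter Metric.isOpen_ball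
  have hOK : O ⊆ K := Set.inter_subset_inter
    (fun y hy => ⟨hy.1.le, hy.2.le⟩) Metric.ball_subset_closedBall
  have hKcomp : IsCompact K :=
    (isCompact_closedBall (0 : EuclideanSpace ℝ (Fin m)) R).inter_left hSlabClosed
  have hxK : x ∈ K := ⟨hx, by rw [Metric.mem_closedBall, dist_zero_right]; exact hxR⟩
  set v : EuclideanSpace ℝ (Fin m) → ℝ := fun y => u y - lam * phi m j a b ε y with hvdef
  have hvcont : ContinuousOn v K := by
    apply ContinuousOn.sub (hcont.mono Set.inter_subset_left)
    exact (continuous_const.mul (phi_contDiff m j a b ε).continuous).continuousOn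
  obtain ⟨x₀, hx₀K, hx₀max⟩ := hKcomp.exists_isMaxOn ⟨x, hxK⟩ hvcont
  have hmaxK : ∀ y ∈ K, v y ≤ v x₀ := fun y hy => hx₀max hy
  have hvx₀ : v x₀ ≤ 0 := by
    by_cases hO : x₀ ∈ O
    · exfalso
      have hvCD : ContDiffOn ℝ 2 v O := by
        apply ContDiffOn.sub (hharm.1.mono Set.inter_subset_left)
        exact (contDiff_const.mul (phi_contDiff m j a b ε)).contDiffOn
      have hd2 : ∀ k : Fin m,
          fderiv ℝ (fun y => fderiv ℝ v y (EuclideanSpace.single k 1)) x₀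
            (EuclideanSpace.single k 1) ≤ 0 :=
        fun k => dir2_nonpos hOopen hO hvCD (fun y hy => hmaxK y (hOK hy))
      have hx₀S : x₀ ∈ OSlab := hO.1
      have hterm : ∀ k : Fin m,
          fderiv ℝ (fun y => fderiv ℝ v y (EuclideanSpace.single k 1)) x₀
              (EuclideanSpace.single k 1)
            = fderiv ℝ (fun y => fderiv ℝ u y (EuclideanSpace.single k 1)) x₀
                (EuclideanSpace.single k 1)
              - lam * (-(if j = k then (1:ℝ) else 0) + 2 * ε) := by
        intro k
        have hev : (fun y => fderiv ℝ v y (EuclideanSpace.single k 1))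
            =ᶠ[nhds x₀] (fun y => fderiv ℝ u y (EuclideanSpace.single k 1)
              - lam * phiG m j a b ε k y) := by
          filter_upwards [hOSlabOpen.mem_nhds hx₀S] with y hy
          have hud : DifferentiableAt ℝ u y :=
            (hharm.1.differentiableOn (by norm_num)).differentiableAt (hOSlabOpen.mem_nhds hy)
          have hfd : fderiv ℝ v y = fderiv ℝ u y - lam • phiD m j a b ε y :=
            (hud.hasFDerivAt.sub ((phi_hasFDerivAt m j a b ε y).const_mul lam)).fderiv
          rw [hfd]
          rw [ContinuousLinearMap.sub_apply, ContinuousLinearMap.smul_apply,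
            phiD_apply m j a b ε y k]
          rfl
        rw [hev.fderiv_eq]
        have hA : DifferentiableAt ℝ
            (fun y => fderiv ℝ u y (EuclideanSpace.single k 1)) x₀ := by
          have h1 : DifferentiableAt ℝ (fderiv ℝ u) x₀ :=
            ((hharm.1.fderiv_of_isOpen (m := 1) hOSlabOpen (by norm_num)).differentiableOn
              (by norm_num)).differentiableAt (hOSlabOpen.mem_nhds hx₀S)
          exact (ContinuousLinearMap.apply ℝ ℝ
            (EuclideanSpace.single k 1)).differentiableAt.comp x₀ h1
        have hG := phiG_hasFDerivAt m j a b ε k x₀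
        have hfd2 : fderiv ℝ (fun y => fderiv ℝ u y (EuclideanSpace.single k 1)
              - lam * phiG m j a b ε k y) x₀
            = fderiv ℝ (fun y => fderiv ℝ u y (EuclideanSpace.single k 1)) x₀
              - lam • ((-(if j = k then (1:ℝ) else 0)) • (EuclideanSpace.proj (𝕜 := ℝ) j)
                + (2 * ε) • (EuclideanSpace.proj (𝕜 := ℝ) k)) :=
          (hA.hasFDerivAt.sub (hG.const_mul lam)).fderiv
        rw [hfd2]
        rw [ContinuousLinearMap.sub_apply, ContinuousLinearMap.smul_apply,
          ContinuousLinearMap.add_apply, ContinuousLinearMap.smul_apply,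
          ContinuousLinearMap.smul_apply]
        have e1 : (EuclideanSpace.proj (𝕜 := ℝ) j) (EuclideanSpace.single k 1)
            = (if j = k then (1:ℝ) else 0) := by
          rw [PiLp.proj_apply, EuclideanSpace.single_apply]
        have e2 : (EuclideanSpace.proj (𝕜 := ℝ) k) (EuclideanSpace.single k 1) = (1:ℝ) := by
          rw [PiLp.proj_apply, EuclideanSpace.single_apply]
          simp
        rw [e1, e2]
        split_ifs with h <;> simp only [smul_eq_mul] <;> ring
      have hlapv : ∑ k : Fin m, fderiv ℝ
            (fun y => fderiv ℝ v y (EuclideanSpace.single k 1)) x₀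
            (EuclideanSpace.single k 1)
          = lam * (1 - 2 * ε * m) := by
        rw [Finset.sum_congr rfl (fun k _ => hterm k), Finset.sum_sub_distrib]
        have hlu : ∑ k : Fin m, fderiv ℝ
            (fun y => fderiv ℝ u y (EuclideanSpace.single k 1)) x₀
            (EuclideanSpace.single k 1) = 0 := hharm.2 x₀ hx₀S
        rw [hlu, ← Finset.mul_sum, Finset.sum_add_distrib]
        have h1 : ∑ k : Fin m, -(if j = k then (1:ℝ) else 0) = -1 := by
          simp [Finset.sum_ite_eq]
        have h2 : ∑ _k : Fin m, 2 * ε = m * (2 * ε) := by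
          rw [Finset.sum_const, Finset.card_univ, Fintype.card_fin, nsmul_eq_mul]
        rw [h1, h2]
        ring
      have hsum : ∑ k : Fin m, fderiv ℝ
            (fun y => fderiv ℝ v y (EuclideanSpace.single k 1)) x₀
            (EuclideanSpace.single k 1) ≤ 0 :=
        Finset.sum_nonpos (fun k _ => hd2 k)
      rw [hlapv] at hsum
      have h2εm : 2 * ε * m = 1 / 2 := by
        rw [hεdef]; field_simp; ring
      rw [h2εm] at hsum
      nlinarith
    · have hx₀Slab : x₀ ∈ Slab := hx₀K.1
      have hx₀ball : ‖x₀‖ ≤ R := by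
        have h := hx₀K.2
        rwa [Metric.mem_closedBall, dist_zero_right] at h
      have hq : 0 ≤ (x₀ j - a) * (b - x₀ j) / 2 := by
        have h1 := hx₀Slab.1
        have h2 := hx₀Slab.2
        have h3 : 0 ≤ (x₀ j - a) * (b - x₀ j) := mul_nonneg (by linarith) (by linarith)
        linarith
      have hs : 0 ≤ ∑ i, ε * (x₀ i * x₀ i) :=
        Finset.sum_nonneg fun i _ => mul_nonneg hε.le (mul_self_nonneg _)
      have hphi0 : 0 ≤ phi m j a b ε x₀ := by unfold phi; linarith
      by_cases hbdry : x₀ j = a ∨ x₀ j = b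
      · have h0 := hzero x₀ hbdry
        have : v x₀ = 0 - lam * phi m j a b ε x₀ := by rw [hvdef]; simp [h0]
        rw [this]
        nlinarith
      · push_neg at hbdry
        have hin : x₀ ∈ OSlab :=
          ⟨lt_of_le_of_ne hx₀Slab.1 (Ne.symm hbdry.1), lt_of_le_of_ne hx₀Slab.2 hbdry.2⟩
        have hnball : x₀ ∉ Metric.ball (0 : EuclideanSpace ℝ (Fin m)) R :=
          fun h => hO ⟨hin, h⟩
        rw [Metric.mem_ball, dist_zero_right] at hnball
        have hxR' : ‖x₀‖ = R := le_antisymm hx₀ball (not_lt.mp hnball)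
        have hsumnorm : ∑ i, x₀ i * x₀ i = R ^ 2 := by
          have h1 := EuclideanSpace.norm_eq x₀
          rw [← hxR', h1, Real.sq_sqrt (Finset.sum_nonneg fun i _ => sq_nonneg _)]
          exact Finset.sum_congr rfl fun i _ => by
            rw [Real.norm_eq_abs, sq_abs, sq]
        have hu : u x₀ ≤ C := le_trans (le_abs_self _) (hC x₀ hx₀Slab)
        have hφ : ε * R ^ 2 ≤ phi m j a b ε x₀ := by
          unfold phi
          rw [← Finset.mul_sum, hsumnorm]
          linarith
        have : v x₀ ≤ C - lam * (ε * R ^ 2) := by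
          rw [hvdef]
          simp only
          nlinarith
        nlinarith
  have hvx : v x ≤ 0 := le_trans (hmaxK x hxK) hvx₀
  rw [hvdef] at hvx
  simp only at hvx
  linarith

lemma le_zero_of_forall_mul {c A : ℝ} (hA : 0 ≤ A) (h : ∀ l : ℝ, 0 < l → c ≤ l * A) :
    c ≤ 0 := by
  by_contra hc
  push_neg at hc
  have h1 := h (c / (2 * (A + 1))) (by positivity)
  rw [div_mul_eq_mul_div, le_div_iff₀ (by positivity)] at h1
  nlinarith

/-- Dirichlet parabolicity of the Euclidean slab: a bounded continuous function on the closed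
slab `{x ∈ ℝ^m : a ≤ x_m ≤ b}` which is harmonic in the open slab and vanishes on the two
boundary hyperplanes vanishes identically on the slab. -/
theorem dirichlet_parabolicity_slab (m : ℕ) (hm : 1 ≤ m) (a b : ℝ) (hab : a < b)
    (j : Fin m) (hj : j = (⟨m - 1, by omega⟩ : Fin m))
    (u : EuclideanSpace ℝ (Fin m) → ℝ)
    (hbd : ∃ C : ℝ, ∀ x ∈ {x : EuclideanSpace ℝ (Fin m) | a ≤ x j ∧ x j ≤ b}, |u x| ≤ C)
    (hcont : ContinuousOn u {x : EuclideanSpace ℝ (Fin m) | a ≤ x j ∧ x j ≤ b})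
    (hharm : IsHarmonicOn u {x : EuclideanSpace ℝ (Fin m) | a < x j ∧ x j < b})
    (hzero : ∀ x : EuclideanSpace ℝ (Fin m), x j = a ∨ x j = b → u x = 0) :
    ∀ x ∈ {x : EuclideanSpace ℝ (Fin m) | a ≤ x j ∧ x j ≤ b}, u x = 0 := by
  intro x hx
  obtain ⟨C, hC⟩ := hbd
  have hm0 : (0:ℝ) < m := by exact_mod_cast hm
  have hA : 0 ≤ phi m j a b (1 / (4 * (m:ℝ))) x := by
    unfold phi
    have hε : (0:ℝ) < 1 / (4 * (m:ℝ)) := by positivity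
    have h1 : 0 ≤ (x j - a) * (b - x j) :=
      mul_nonneg (by linarith [hx.1]) (by linarith [hx.2])
    have h2 : 0 ≤ ∑ i, (1 / (4 * (m:ℝ))) * (x i * x i) :=
      Finset.sum_nonneg fun i _ => mul_nonneg hε.le (mul_self_nonneg _)
    linarith
  have h1 : u x ≤ 0 := le_zero_of_forall_mul hA
    (fun l hl => key_ineq m hm a b hab j u C hC hcont hharm hzero x hx l hl)
  have h2 : -u x ≤ 0 := by
    apply le_zero_of_forall_mul hA
    intro l hl
    exact key_ineq m hm a b hab j (fun y => -u y) C
      (fun y hy => by simpa using hC y hy)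
      (hcont.neg)
      ⟨hharm.1.neg, fun y hy => by rw [lap_neg]; simp [hharm.2 y hy]⟩
      (fun y hy => by simp [hzero y hy]) x hx l hl
  linarith
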